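/- (Positivity propagation to the unbounded region) Let K satisfy the kernel assumption, δ > 0, and let a_1, …, a_n ∈ ℝ^p be fixed vectors and b_1, …, b_n ≥ 0 fixed scalars. If there exists M > 0 such that inf over {x ∈ ℝ^p : ‖x‖₂ = M} of (1/n) Σ_{i=1}^n U_1(x; a_i, b_i) is strictly positive, then inf over {x ∈ ℝ^p : ‖x‖₂ ≥ M} of (1/n) Σ_{i=1}^n U_1(x; a_i, b_i) is strictly positive. -/

import Mathlib

open MeasureTheory ProbabilityTheory
open scoped BigOperators RealInnerProductSpace Gradient

/-- The kernel assumption: `K` is a nonnegative, symmetric kernel integrating to one,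
bounded, Lipschitz, positive at zero, and `x ↦ x * K x` is bounded, Lipschitz and
absolutely integrable. -/
structure IsGoodKernel (K : ℝ → ℝ) : Prop where
  nonneg : ∀ x, 0 ≤ K x
  symm : ∀ x, K x = K (-x)
  integral_one : (∫ x, K x) = 1
  bounded : ∃ B, ∀ x, |K x| ≤ B
  lipschitz : ∃ L : NNReal, LipschitzWith L K
  pos_at_zero : 0 < K 0
  bar_bounded : ∃ B, ∀ x, |x * K x| ≤ B
  bar_lipschitz : ∃ L : NNReal, LipschitzWith L (fun x => x * K x)
  bar_integrable : Integrable (fun x => x * K x)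

/-- The scaled kernel `K_δ(x) = (1/δ) K(x/δ)`. -/
noncomputable def scaledKernel (K : ℝ → ℝ) (δ : ℝ) (x : ℝ) : ℝ := (1 / δ) * K (x / δ)

/-- The convolution-type smoothed loss `l_δ(x) = ∫ |y| K_δ(x - y) dy`. -/
noncomputable def smoothedLoss (K : ℝ → ℝ) (δ : ℝ) (x : ℝ) : ℝ :=
  ∫ y, |y| * scaledKernel K δ (x - y)

/-- The smoothed empirical objective
`F_δ(x) = (1/n) ∑ᵢ l_δ((aᵢᵀ x)² - bᵢ)`. -/
noncomputable def smoothedObj {p n : ℕ} (K : ℝ → ℝ) (δ : ℝ)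
    (a : Fin n → EuclideanSpace ℝ (Fin p)) (b : Fin n → ℝ)
    (x : EuclideanSpace ℝ (Fin p)) : ℝ :=
  (n : ℝ)⁻¹ * ∑ i, smoothedLoss K δ ((⟪a i, x⟫) ^ 2 - b i)

/-- `Δ(x) = min(‖x - x⋆‖, ‖x + x⋆‖)`, the distance to the pair of true signals. -/
noncomputable def distSig {p : ℕ} (xs x : EuclideanSpace ℝ (Fin p)) : ℝ :=
  min ‖x - xs‖ ‖x + xs‖

/-- The standard Gaussian measure `N(0, I_p)` on `EuclideanSpace ℝ (Fin p)`. -/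
noncomputable def stdGaussian (p : ℕ) : Measure (EuclideanSpace ℝ (Fin p)) :=
  Measure.map (MeasurableEquiv.toLp 2 (Fin p → ℝ))
    (Measure.pi fun _ => gaussianReal 0 1)

/-- `a` is a family of i.i.d. standard Gaussian random vectors in `ℝ^p`. -/
def IsIIDStdGaussian {Ω : Type*} [MeasurableSpace Ω] (P : Measure Ω) {p : ℕ} {ι : Type*}
    (a : ι → Ω → EuclideanSpace ℝ (Fin p)) : Prop :=
  (∀ i, Measurable (a i)) ∧
  iIndepFun a P ∧
  (∀ i, Measure.map (a i) P = stdGaussian p)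


/-- `U₁(x; a, b) = 2 (aᵀx)² l'_δ((aᵀx)² - b)`. -/
noncomputable def U1 {p : ℕ} (K : ℝ → ℝ) (δ : ℝ)
    (x a : EuclideanSpace ℝ (Fin p)) (b : ℝ) : ℝ :=
  2 * (⟪a, x⟫) ^ 2 * deriv (smoothedLoss K δ) ((⟪a, x⟫) ^ 2 - b)

/-- `U₂(x; a, b) = (aᵀx⋆)² (2 l'_δ((aᵀx)² - b) + 4 (aᵀx)² l''_δ((aᵀx)² - b))`. -/
noncomputable def U2 {p : ℕ} (K : ℝ → ℝ) (δ : ℝ) (xs : EuclideanSpace ℝ (Fin p))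
    (x a : EuclideanSpace ℝ (Fin p)) (b : ℝ) : ℝ :=
  (⟪a, xs⟫) ^ 2 * (2 * deriv (smoothedLoss K δ) ((⟪a, x⟫) ^ 2 - b) +
    4 * (⟪a, x⟫) ^ 2 * deriv (deriv (smoothedLoss K δ)) ((⟪a, x⟫) ^ 2 - b))

/-- `U₃(x; a, b) = 2 (aᵀx⋆)(aᵀx) l'_δ((aᵀx)² - b)`. -/
noncomputable def U3 {p : ℕ} (K : ℝ → ℝ) (δ : ℝ) (xs : EuclideanSpace ℝ (Fin p))
    (x a : EuclideanSpace ℝ (Fin p)) (b : ℝ) : ℝ :=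
  2 * ⟪a, xs⟫ * ⟪a, x⟫ * deriv (smoothedLoss K δ) ((⟪a, x⟫) ^ 2 - b)

section AuxLemmas

variable {K : ℝ → ℝ} {δ : ℝ}

lemma IsGoodKernel.continuous (hK : IsGoodKernel K) : Continuous K := by
  obtain ⟨L, hL⟩ := hK.lipschitz
  exact hL.continuous

lemma IsGoodKernel.integrable (hK : IsGoodKernel K) : Integrable K := by
  by_contra h
  have := integral_undef h
  rw [hK.integral_one] at this
  norm_num at this

lemma scaledKernel_nonneg (hK : IsGoodKernel K) (hδ : 0 < δ) (u : ℝ) :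
    0 ≤ scaledKernel K δ u :=
  mul_nonneg (by positivity) (hK.nonneg _)

lemma scaledKernel_continuous (hK : IsGoodKernel K) :
    Continuous (scaledKernel K δ) :=
  continuous_const.mul (hK.continuous.comp (continuous_id.div_const δ))

lemma scaledKernel_integrable (hK : IsGoodKernel K) (hδ : 0 < δ) :
    Integrable (scaledKernel K δ) :=
  (hK.integrable.comp_div hδ.ne').const_mul _

lemma scaledKernel_integral (hK : IsGoodKernel K) (hδ : 0 < δ) :
    (∫ u, scaledKernel K δ u) = 1 := by
  unfold scaledKernel
  rw [integral_const_mul, Measure.integral_comp_div K δ, hK.integral_one, abs_of_pos hδ, smul_eq_mul]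
  field_simp

lemma abs_mul_scaledKernel_integrable (hK : IsGoodKernel K) (hδ : 0 < δ) :
    Integrable (fun u => |u| * scaledKernel K δ u) := by
  have h1 : Integrable (fun u : ℝ => (u / δ) * K (u / δ)) :=
    hK.bar_integrable.comp_div hδ.ne'
  have h2 := h1.abs
  refine h2.congr (Filter.Eventually.of_forall fun u => ?_)
  show |u / δ * K (u / δ)| = |u| * scaledKernel K δ u
  unfold scaledKernel
  rw [abs_mul, abs_div, abs_of_pos hδ, abs_of_nonneg (hK.nonneg _)]
  field_simp

lemma real_sign_mono : Monotone Real.sign := by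
  intro a b hab
  rcases lt_trichotomy a 0 with ha | ha | ha
  · rw [Real.sign_of_neg ha]
    rcases lt_trichotomy b 0 with hb | hb | hb
    · rw [Real.sign_of_neg hb]
    · rw [hb, Real.sign_zero]; norm_num
    · rw [Real.sign_of_pos hb]; norm_num
  · subst ha
    rw [Real.sign_zero]
    rcases eq_or_lt_of_le hab with hb | hb
    · rw [← hb, Real.sign_zero]
    · rw [Real.sign_of_pos hb]; norm_num
  · rw [Real.sign_of_pos ha, Real.sign_of_pos (lt_of_lt_of_le ha hab)]

lemma real_sign_measurable : Measurable Real.sign := by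
  have : Real.sign = fun r : ℝ => if r < 0 then (-1 : ℝ) else if 0 < r then 1 else 0 := by
    funext r; rfl
  rw [this]
  exact Measurable.ite measurableSet_Iio measurable_const
    (Measurable.ite measurableSet_Ioi measurable_const measurable_const)

lemma real_sign_abs_le (r : ℝ) : |Real.sign r| ≤ 1 := by
  rcases Real.sign_apply_eq r with h | h | h <;> rw [h] <;> norm_num

lemma smoothedLoss_eq (x : ℝ) :
    smoothedLoss K δ x = ∫ u, |x - u| * scaledKernel K δ u := by
  unfold smoothedLoss
  rw [← integral_sub_left_eq_self (fun u => |x - u| * scaledKernel K δ u) volume x]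
  congr 1
  funext y
  rw [sub_sub_cancel]

lemma hasDerivAt_smoothedLoss (hK : IsGoodKernel K) (hδ : 0 < δ) (x₀ : ℝ) :
    Integrable (fun u => Real.sign (x₀ - u) * scaledKernel K δ u) ∧
    HasDerivAt (smoothedLoss K δ) (∫ u, Real.sign (x₀ - u) * scaledKernel K δ u) x₀ := by
  have hKc : Continuous (scaledKernel K δ) := scaledKernel_continuous hK
  have hae : ∀ᵐ u : ℝ, u ≠ x₀ := by
    have hset : {u : ℝ | ¬ u ≠ x₀} = {x₀} := by ext u; simp
    rw [MeasureTheory.ae_iff, hset]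
    exact Real.volume_singleton
  have hmeas : ∀ᶠ x in nhds x₀, AEStronglyMeasurable
      (fun u => |x - u| * scaledKernel K δ u) (volume : Measure ℝ) :=
    Filter.Eventually.of_forall fun x =>
      ((continuous_const.sub continuous_id).abs.mul hKc).aestronglyMeasurable
  have hFint : Integrable (fun u => |x₀ - u| * scaledKernel K δ u) := by
    have hint : Integrable (fun u => |x₀| * scaledKernel K δ u + |u| * scaledKernel K δ u) :=
      ((scaledKernel_integrable hK hδ).const_mul _).add
        (abs_mul_scaledKernel_integrable hK hδ)
    refine hint.mono'
      (((continuous_const.sub continuous_id).abs.mul hKc).aestronglyMeasurable)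
      (Filter.Eventually.of_forall fun u => ?_)
    have h0 := scaledKernel_nonneg hK hδ u
    have h1 : |x₀ - u| ≤ |x₀| + |u| := abs_sub x₀ u
    rw [Real.norm_eq_abs, abs_mul, abs_abs, abs_of_nonneg h0]
    nlinarith [abs_nonneg (x₀ - u)]
  have hF'meas : AEStronglyMeasurable
      (fun u => Real.sign (x₀ - u) * scaledKernel K δ u) (volume : Measure ℝ) :=
    ((real_sign_measurable.comp (measurable_const.sub measurable_id)).mul
      hKc.measurable).aestronglyMeasurable
  have hlip : ∀ᵐ u : ℝ, LipschitzOnWith (Real.nnabs (scaledKernel K δ u))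
      (fun x => |x - u| * scaledKernel K δ u) (Metric.ball x₀ 1) := by
    refine Filter.Eventually.of_forall fun u => LipschitzWith.lipschitzOnWith ?_
    refine LipschitzWith.of_dist_le_mul fun x y => ?_
    have h0 := scaledKernel_nonneg hK hδ u
    rw [Real.dist_eq, Real.dist_eq, Real.coe_nnabs, abs_of_nonneg h0]
    have h2 : |(|x - u| - |y - u|)| ≤ |x - y| := by
      have h3 := abs_abs_sub_abs_le_abs_sub (x - u) (y - u)
      rw [sub_sub_sub_cancel_right] at h3
      exact h3
    calc |(|x - u| * scaledKernel K δ u - |y - u| * scaledKernel K δ u)|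
        = |(|x - u| - |y - u|)| * scaledKernel K δ u := by
          rw [← sub_mul, abs_mul, abs_of_nonneg h0]
      _ ≤ scaledKernel K δ u * |x - y| := by
          rw [mul_comm]
          exact mul_le_mul_of_nonneg_left h2 h0
  have hdiff : ∀ᵐ u : ℝ, HasDerivAt (fun x => |x - u| * scaledKernel K δ u)
      (Real.sign (x₀ - u) * scaledKernel K δ u) x₀ := by
    refine hae.mono fun u hu => ?_
    have habs : HasDerivAt (fun x => |x - u|) (Real.sign (x₀ - u)) x₀ := by
      rcases hu.lt_or_gt with h | h
      · rw [Real.sign_of_pos (by linarith : (0:ℝ) < x₀ - u)]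
        have hd : HasDerivAt (fun x : ℝ => x - u) 1 x₀ := (hasDerivAt_id x₀).sub_const u
        refine hd.congr_of_eventuallyEq ?_
        filter_upwards [isOpen_Ioi.mem_nhds (show u < x₀ from h)] with x hx
        exact abs_of_pos (by simpa [sub_pos] using hx)
      · rw [Real.sign_of_neg (by linarith : x₀ - u < 0)]
        have hd : HasDerivAt (fun x : ℝ => u - x) (-1) x₀ := by
          simpa using (hasDerivAt_id x₀).const_sub u
        refine hd.congr_of_eventuallyEq ?_
        filter_upwards [isOpen_Iio.mem_nhds (show x₀ < u from h)] with x hx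
        rw [abs_of_neg (by simpa [sub_neg] using hx)]
        ring
    exact habs.mul_const (scaledKernel K δ u)
  have key := hasDerivAt_integral_of_dominated_loc_of_lip (Metric.ball_mem_nhds x₀ one_pos) hmeas hFint hF'meas
    hlip (scaledKernel_integrable hK hδ) hdiff
  obtain ⟨hint, hder⟩ := key
  refine ⟨hint, ?_⟩
  have heq : smoothedLoss K δ = fun x => ∫ u, |x - u| * scaledKernel K δ u :=
    funext smoothedLoss_eq
  rw [heq]
  exact hder

lemma deriv_smoothedLoss_eq (hK : IsGoodKernel K) (hδ : 0 < δ) (x : ℝ) :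
    deriv (smoothedLoss K δ) x = ∫ u, Real.sign (x - u) * scaledKernel K δ u :=
  (hasDerivAt_smoothedLoss hK hδ x).2.deriv

lemma deriv_smoothedLoss_mono (hK : IsGoodKernel K) (hδ : 0 < δ) :
    Monotone (deriv (smoothedLoss K δ)) := by
  intro s t hst
  rw [deriv_smoothedLoss_eq hK hδ, deriv_smoothedLoss_eq hK hδ]
  refine integral_mono (hasDerivAt_smoothedLoss hK hδ s).1
    (hasDerivAt_smoothedLoss hK hδ t).1 fun u => ?_
  exact mul_le_mul_of_nonneg_right (real_sign_mono (by linarith))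
    (scaledKernel_nonneg hK hδ u)

lemma abs_deriv_smoothedLoss_le_one (hK : IsGoodKernel K) (hδ : 0 < δ) (x : ℝ) :
    |deriv (smoothedLoss K δ) x| ≤ 1 := by
  rw [deriv_smoothedLoss_eq hK hδ]
  have h1 : |∫ u, Real.sign (x - u) * scaledKernel K δ u|
      ≤ ∫ u, |Real.sign (x - u)| * |scaledKernel K δ u| := by
    simpa [Real.norm_eq_abs, abs_mul] using
      norm_integral_le_integral_norm (μ := (volume : Measure ℝ))
        (fun u => Real.sign (x - u) * scaledKernel K δ u)
  refine h1.trans ?_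
  have h2 : Integrable (fun u => |Real.sign (x - u)| * |scaledKernel K δ u|) := by
    refine (hasDerivAt_smoothedLoss hK hδ x).1.abs.congr
      (Filter.Eventually.of_forall fun u => abs_mul _ _)
  rw [← scaledKernel_integral hK hδ]
  refine integral_mono h2 (scaledKernel_integrable hK hδ) fun u => ?_
  have h0 := scaledKernel_nonneg hK hδ u
  rw [abs_of_nonneg h0]
  nlinarith [real_sign_abs_le (x - u), abs_nonneg (Real.sign (x - u))]

end AuxLemmas

/-- Positivity propagation to the unbounded region. If the infimum of
`(1/n) ∑ᵢ U₁(x; aᵢ, bᵢ)` over the sphere `‖x‖ = M` is strictly positive, then so is its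
infimum over the whole region `‖x‖ ≥ M`. -/
theorem U1_positivity_propagation
    {p n : ℕ} (K : ℝ → ℝ) (hK : IsGoodKernel K) (δ : ℝ) (hδ : 0 < δ)
    (a : Fin n → EuclideanSpace ℝ (Fin p)) (b : Fin n → ℝ) (hb : ∀ i, 0 ≤ b i)
    (M : ℝ) (hM : 0 < M)
    (hpos : 0 < sInf ((fun x : EuclideanSpace ℝ (Fin p) =>
      (n : ℝ)⁻¹ * ∑ i, U1 K δ x (a i) (b i)) ''
        {x : EuclideanSpace ℝ (Fin p) | ‖x‖ = M})) :
    0 < sInf ((fun x : EuclideanSpace ℝ (Fin p) =>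
      (n : ℝ)⁻¹ * ∑ i, U1 K δ x (a i) (b i)) ''
        {x : EuclideanSpace ℝ (Fin p) | M ≤ ‖x‖}) := by

  have hmono := deriv_smoothedLoss_mono hK hδ
  have hbound := abs_deriv_smoothedLoss_le_one hK hδ
  have hBdd : BddBelow ((fun x : EuclideanSpace ℝ (Fin p) =>
      (n : ℝ)⁻¹ * ∑ i, U1 K δ x (a i) (b i)) ''
        {x : EuclideanSpace ℝ (Fin p) | ‖x‖ = M}) := by
    refine ⟨(n : ℝ)⁻¹ * ∑ i : Fin n, -(2 * ‖a i‖ ^ 2 * M ^ 2), ?_⟩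
    rintro y ⟨x, hx, rfl⟩
    have hx' : ‖x‖ = M := hx
    refine mul_le_mul_of_nonneg_left (Finset.sum_le_sum fun i _ => ?_) (by positivity)
    have hc : |⟪a i, x⟫| ≤ ‖a i‖ * M := by
      have h := abs_real_inner_le_norm (a i) x
      rw [hx'] at h
      exact h
    have hcc : (⟪a i, x⟫) ^ 2 ≤ ‖a i‖ ^ 2 * M ^ 2 := by
      nlinarith [abs_nonneg (⟪a i, x⟫), sq_abs (⟪a i, x⟫), norm_nonneg (a i), hM.le]
    have hL : -1 ≤ deriv (smoothedLoss K δ) ((⟪a i, x⟫) ^ 2 - b i) := by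
      have h := hbound ((⟪a i, x⟫) ^ 2 - b i)
      have := abs_le.1 h
      linarith [this.1]
    simp only [U1]
    nlinarith [sq_nonneg (⟪a i, x⟫)]
  have hne_sphere : ({x : EuclideanSpace ℝ (Fin p) | ‖x‖ = M}).Nonempty := by
    by_contra h
    rw [Set.not_nonempty_iff_eq_empty] at h
    rw [h, Set.image_empty, Real.sInf_empty] at hpos
    exact lt_irrefl 0 hpos
  obtain ⟨z, hz⟩ := hne_sphere
  have hzM : ‖z‖ = M := hz
  have hne : ((fun x : EuclideanSpace ℝ (Fin p) =>
      (n : ℝ)⁻¹ * ∑ i, U1 K δ x (a i) (b i)) ''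
        {x : EuclideanSpace ℝ (Fin p) | M ≤ ‖x‖}).Nonempty :=
    ⟨_, ⟨z, hzM.ge, rfl⟩⟩
  refine lt_of_lt_of_le hpos (le_csInf hne ?_)
  rintro y ⟨x, hx, rfl⟩
  have hxM : M ≤ ‖x‖ := hx
  have hx' : (0 : ℝ) < ‖x‖ := lt_of_lt_of_le hM hxM
  set t : ℝ := ‖x‖ / M with htdef
  have ht : 1 ≤ t := (one_le_div hM).2 hxM
  set x₀ : EuclideanSpace ℝ (Fin p) := (M / ‖x‖) • x with hx₀def
  have hx₀ : ‖x₀‖ = M := by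
    rw [hx₀def, norm_smul, Real.norm_eq_abs, abs_of_pos (div_pos hM hx'),
      div_mul_cancel₀ _ hx'.ne']
  have hc : ∀ i, ⟪a i, x⟫ = t * ⟪a i, x₀⟫ := by
    intro i
    rw [hx₀def, real_inner_smul_right, htdef]
    field_simp
  have h1 : sInf ((fun x : EuclideanSpace ℝ (Fin p) =>
      (n : ℝ)⁻¹ * ∑ i, U1 K δ x (a i) (b i)) ''
        {x : EuclideanSpace ℝ (Fin p) | ‖x‖ = M})
      ≤ (n : ℝ)⁻¹ * ∑ i, U1 K δ x₀ (a i) (b i) :=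
    csInf_le hBdd ⟨x₀, hx₀, rfl⟩
  have hfx : (n : ℝ)⁻¹ * ∑ i, U1 K δ x (a i) (b i)
      = 2 * t ^ 2 * ((n : ℝ)⁻¹ * ∑ i, (⟪a i, x₀⟫) ^ 2 *
        deriv (smoothedLoss K δ) (t ^ 2 * (⟪a i, x₀⟫) ^ 2 - b i)) := by
    have hterm : ∀ i ∈ Finset.univ, U1 K δ x (a i) (b i)
        = 2 * t ^ 2 * ((⟪a i, x₀⟫) ^ 2 *
          deriv (smoothedLoss K δ) (t ^ 2 * (⟪a i, x₀⟫) ^ 2 - b i)) := by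
      intro i _
      simp only [U1]
      rw [hc i, mul_pow]
      ring
    rw [Finset.sum_congr rfl hterm, ← Finset.mul_sum]
    ring
  have hfx0 : (n : ℝ)⁻¹ * ∑ i, U1 K δ x₀ (a i) (b i)
      = 2 * ((n : ℝ)⁻¹ * ∑ i, (⟪a i, x₀⟫) ^ 2 *
        deriv (smoothedLoss K δ) ((⟪a i, x₀⟫) ^ 2 - b i)) := by
    have hterm : ∀ i ∈ Finset.univ, U1 K δ x₀ (a i) (b i)
        = 2 * ((⟪a i, x₀⟫) ^ 2 *
          deriv (smoothedLoss K δ) ((⟪a i, x₀⟫) ^ 2 - b i)) := by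
      intro i _
      simp only [U1]
      ring
    rw [Finset.sum_congr rfl hterm, ← Finset.mul_sum]
    ring
  have hST : (n : ℝ)⁻¹ * ∑ i, (⟪a i, x₀⟫) ^ 2 *
        deriv (smoothedLoss K δ) ((⟪a i, x₀⟫) ^ 2 - b i)
      ≤ (n : ℝ)⁻¹ * ∑ i, (⟪a i, x₀⟫) ^ 2 *
        deriv (smoothedLoss K δ) (t ^ 2 * (⟪a i, x₀⟫) ^ 2 - b i) := by
    refine mul_le_mul_of_nonneg_left (Finset.sum_le_sum fun i _ => ?_) (by positivity)
    refine mul_le_mul_of_nonneg_left (hmono ?_) (sq_nonneg _)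
    have h2 : (1 : ℝ) * (⟪a i, x₀⟫) ^ 2 ≤ t ^ 2 * (⟪a i, x₀⟫) ^ 2 :=
      mul_le_mul_of_nonneg_right (by nlinarith) (sq_nonneg _)
    linarith
  have hpos0 : 0 < (n : ℝ)⁻¹ * ∑ i, U1 K δ x₀ (a i) (b i) := lt_of_lt_of_le hpos h1
  rw [hfx0] at h1 hpos0
  show sInf _ ≤ (n : ℝ)⁻¹ * ∑ i, U1 K δ x (a i) (b i)
  rw [hfx]
  have ht2 : 1 ≤ t ^ 2 := by nlinarith
  nlinarith [hST, ht2, hpos0, h1]
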